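/- If X is a Hausdorff space and D ⊆ X, then |closure(D)| ≤ |D|^{wt(X)·ψ_c(X)}. -/

import Mathlib

open Cardinal Set TopologicalSpace

universe u

/-- The tightness `t(X)`: the least infinite cardinal `κ` such that whenever
`x ∈ closure A` there is `B ⊆ A` with `#B ≤ κ` and `x ∈ closure B`. -/
noncomputable def tightness (X : Type u) [TopologicalSpace X] : Cardinal.{u} :=
  sInf {κ : Cardinal.{u} | ℵ₀ ≤ κ ∧ ∀ (A : Set X) (x : X), x ∈ closure A →
    ∃ B ⊆ A, #B ≤ κ ∧ x ∈ closure B}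

/-- The `κ`-closure of a set `A`. -/
noncomputable def clk {X : Type u} [TopologicalSpace X] (κ : Cardinal.{u}) (A : Set X) : Set X :=
  ⋃ (B : Set X) (_ : B ⊆ A ∧ #B ≤ κ), closure B

/-- A cover `𝒞` witnessing that `wt X ≤ κ`. -/
noncomputable def IsWtWitness {X : Type u} [TopologicalSpace X] (κ : Cardinal.{u}) (𝒞 : Set (Set X)) : Prop :=
  ⋃₀ 𝒞 = Set.univ ∧ #𝒞 ≤ 2 ^ κ ∧ ∀ C ∈ 𝒞, tightness ↥C ≤ κ ∧ clk (2 ^ κ) C = Set.univ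

/-- The weak tightness `wt(X)`. -/
noncomputable def wt (X : Type u) [TopologicalSpace X] : Cardinal.{u} :=
  sInf {κ : Cardinal.{u} | ℵ₀ ≤ κ ∧ ∃ 𝒞 : Set (Set X), IsWtWitness κ 𝒞}

/-- The Lindelöf number `L(X)`. -/
noncomputable def LindelofNumber (X : Type u) [TopologicalSpace X] : Cardinal.{u} :=
  sInf {κ : Cardinal.{u} | ℵ₀ ≤ κ ∧ ∀ 𝒰 : Set (Set X), (∀ U ∈ 𝒰, IsOpen U) →
    ⋃₀ 𝒰 = Set.univ → ∃ 𝒱 ⊆ 𝒰, #𝒱 ≤ κ ∧ ⋃₀ 𝒱 = Set.univ}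

/-- The pseudocharacter `ψ(X)`. -/
noncomputable def psi (X : Type u) [TopologicalSpace X] : Cardinal.{u} :=
  sInf {κ : Cardinal.{u} | ℵ₀ ≤ κ ∧ ∀ x : X, ∃ 𝒰 : Set (Set X),
    #𝒰 ≤ κ ∧ (∀ U ∈ 𝒰, IsOpen U ∧ x ∈ U) ∧ ⋂₀ 𝒰 = {x}}

/-- The closed pseudocharacter `ψ_c(X)`. -/
noncomputable def psic (X : Type u) [TopologicalSpace X] : Cardinal.{u} :=
  sInf {κ : Cardinal.{u} | ℵ₀ ≤ κ ∧ ∀ x : X, ∃ 𝒰 : Set (Set X),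
    #𝒰 ≤ κ ∧ (∀ U ∈ 𝒰, IsOpen U ∧ x ∈ U) ∧ (⋂ U ∈ 𝒰, closure U) = {x}}

/-- `A` is `𝒞`-saturated: `A ∩ C` is dense in `A` for every `C ∈ 𝒞`. -/
noncomputable def Saturated {X : Type u} [TopologicalSpace X] (𝒞 : Set (Set X)) (A : Set X) : Prop :=
  ∀ C ∈ 𝒞, A ⊆ closure (A ∩ C)

/-- The π-character `πχ(x, X)` of a point: least cardinality of a local π-base at `x`. -/
noncomputable def piCharPt {X : Type u} [TopologicalSpace X] (x : X) : Cardinal.{u} :=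
  sInf {κ : Cardinal.{u} | ∃ ℬ : Set (Set X), #ℬ ≤ κ ∧
    (∀ B ∈ ℬ, IsOpen B ∧ B.Nonempty) ∧ ∀ U : Set X, IsOpen U → x ∈ U → ∃ B ∈ ℬ, B ⊆ U}

/-- The π-character `πχ(X)`. -/
noncomputable def piChar (X : Type u) [TopologicalSpace X] : Cardinal.{u} :=
  ⨆ x : X, piCharPt x

/-- The character `χ(x, X)` of a point: least cardinality of a local base at `x`. -/
noncomputable def charPt {X : Type u} [TopologicalSpace X] (x : X) : Cardinal.{u} :=
  sInf {κ : Cardinal.{u} | ∃ ℬ : Set (Set X), #ℬ ≤ κ ∧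
    (∀ B ∈ ℬ, IsOpen B ∧ x ∈ B) ∧ ∀ U : Set X, IsOpen U → x ∈ U → ∃ B ∈ ℬ, B ⊆ U}

/-- The character `χ(X)`. -/
noncomputable def character (X : Type u) [TopologicalSpace X] : Cardinal.{u} :=
  ⨆ x : X, charPt x

/-- The density `d(X)`: least cardinality of a dense subset. -/
noncomputable def density (X : Type u) [TopologicalSpace X] : Cardinal.{u} :=
  sInf {κ : Cardinal.{u} | ∃ D : Set X, Dense D ∧ #D ≤ κ}

/-- A space is homogeneous if its homeomorphism group acts transitively. -/
noncomputable def Homogeneous (X : Type u) [TopologicalSpace X] : Prop :=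
  ∀ x y : X, ∃ h : X ≃ₜ X, h x = y

/-- A space is power homogeneous if some (nonempty) power of it is homogeneous. -/
noncomputable def PowerHomogeneous (X : Type u) [TopologicalSpace X] : Prop :=
  ∃ I : Type u, Nonempty I ∧ Homogeneous (I → X)

/-- A `G^c_κ`-set: `G = ⋂𝒰 = ⋂_{U ∈ 𝒰} closure U` for a family `𝒰` of `≤ κ` open sets. -/
noncomputable def GcSet {X : Type u} [TopologicalSpace X] (κ : Cardinal.{u}) (G : Set X) : Prop :=
  ∃ 𝒰 : Set (Set X), #𝒰 ≤ κ ∧ (∀ U ∈ 𝒰, IsOpen U) ∧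
    G = ⋂₀ 𝒰 ∧ G = ⋂ U ∈ 𝒰, closure U

/-- A subset is subseparable if it is contained in the closure of a countable set. -/
noncomputable def Subseparable {X : Type u} [TopologicalSpace X] (A : Set X) : Prop :=
  ∃ c : Set X, c.Countable ∧ A ⊆ closure c


/-- Auxiliary: the defining set of `tightness` is attained, so the tightness itself works
as a bound. -/
lemma tightness_spec' (Y : Type u) [TopologicalSpace Y] :
    ∀ (A : Set Y) (x : Y), x ∈ closure A → ∃ B ⊆ A, #B ≤ tightness Y ∧ x ∈ closure B := by
  have hne : {κ : Cardinal.{u} | ℵ₀ ≤ κ ∧ ∀ (A : Set Y) (x : Y), x ∈ closure A →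
      ∃ B ⊆ A, #B ≤ κ ∧ x ∈ closure B}.Nonempty := by
    refine ⟨ℵ₀ ⊔ #Y, le_sup_left, fun A x hx => ⟨A, subset_rfl, ?_, hx⟩⟩
    exact le_sup_of_le_right (mk_set_le A)
  exact (csInf_mem hne).2

lemma tightness_le' (Y : Type u) [TopologicalSpace Y] : tightness Y ≤ ℵ₀ ⊔ #Y := by
  refine csInf_le' ⟨le_sup_left, fun A x hx => ⟨A, subset_rfl, ?_, hx⟩⟩
  exact le_sup_of_le_right (mk_set_le A)

lemma wt_spec' (X : Type u) [TopologicalSpace X] :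
    ℵ₀ ≤ wt X ∧ ∃ 𝒞 : Set (Set X), IsWtWitness (wt X) 𝒞 := by
  have hne : {κ : Cardinal.{u} | ℵ₀ ≤ κ ∧ ∃ 𝒞 : Set (Set X), IsWtWitness κ 𝒞}.Nonempty := by
    refine ⟨ℵ₀ ⊔ #X, le_sup_left, {Set.univ}, sUnion_singleton _, ?_, ?_⟩
    · rw [mk_singleton]
      calc (1 : Cardinal.{u}) = 2 ^ (0 : Cardinal.{u}) := (power_zero 2).symm
        _ ≤ 2 ^ (ℵ₀ ⊔ #X) := power_le_power_left two_ne_zero (by simp)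
    · rintro C rfl
      constructor
      · refine (tightness_le' _).trans (sup_le le_sup_left ?_)
        rw [mk_univ]
        exact le_sup_right
      · refine eq_univ_of_forall fun x => ?_
        refine mem_iUnion.2 ⟨Set.univ, mem_iUnion.2 ⟨⟨subset_rfl, ?_⟩, subset_closure (mem_univ x)⟩⟩
        rw [mk_univ]
        exact (cantor #X).le.trans (power_le_power_left two_ne_zero le_sup_right)
  exact csInf_mem hne

lemma psic_spec' (X : Type u) [TopologicalSpace X] [T2Space X] :
    ℵ₀ ≤ psic X ∧ ∀ x : X, ∃ 𝒰 : Set (Set X),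
      #𝒰 ≤ psic X ∧ (∀ U ∈ 𝒰, IsOpen U ∧ x ∈ U) ∧ (⋂ U ∈ 𝒰, closure U) = {x} := by
  have hne : {κ : Cardinal.{u} | ℵ₀ ≤ κ ∧ ∀ x : X, ∃ 𝒰 : Set (Set X),
      #𝒰 ≤ κ ∧ (∀ U ∈ 𝒰, IsOpen U ∧ x ∈ U) ∧ (⋂ U ∈ 𝒰, closure U) = {x}}.Nonempty := by
    refine ⟨ℵ₀ ⊔ 2 ^ #X, le_sup_left, fun x => ⟨{U | IsOpen U ∧ x ∈ U}, ?_, fun U hU => hU, ?_⟩⟩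
    · refine le_sup_of_le_right ?_
      calc #{U | IsOpen U ∧ x ∈ U} ≤ #(Set X) := mk_set_le _
        _ = 2 ^ #X := mk_set
    · apply subset_antisymm
      · intro y hy
        simp only [mem_iInter] at hy
        by_contra hyx
        have hxy : x ≠ y := fun h => hyx (by simp [h.symm])
        obtain ⟨U, V, hUo, hVo, hxU, hyV, hUV⟩ := t2_separation hxy
        have := hy U ⟨hUo, hxU⟩
        obtain ⟨z, hzV, hzU⟩ := (mem_closure_iff.1 this) V hVo hyV
        exact hUV.ne_of_mem hzU hzV rfl
      · rintro y rfl
        exact mem_iInter₂.2 fun U hU => subset_closure hU.2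
  exact csInf_mem hne

/-- Theorem 2.5. -/
theorem stmt1 {X : Type u} [TopologicalSpace X] [T2Space X] (D : Set X) :
    #(closure D) ≤ #D ^ (wt X * psic X) := by
  rcases eq_empty_or_nonempty D with rfl | hDne
  · simp
  by_cases hD1 : #D ≤ 1
  · have hsub : D.Subsingleton := mk_le_one_iff_set_subsingleton.1 hD1
    obtain ⟨x, hx⟩ := hDne
    have hDx : D = {x} := hsub.eq_singleton_of_mem hx
    subst hDx
    simp [closure_singleton]
  have h2D : (2 : Cardinal.{u}) ≤ #D := by
    exact Cardinal.two_le_iff_one_lt.2 (not_le.1 hD1)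
  obtain ⟨hwt0, 𝒞, hcov, hcard𝒞, hC⟩ := wt_spec' X
  obtain ⟨hps0, hpsi⟩ := psic_spec' X
  choose 𝒰 hU1 hU2 hU3 using hpsi
  set κ := wt X * psic X with hκdef
  have hps_ne : psic X ≠ 0 := fun h => by simp [h] at hps0; exact (aleph0_ne_zero hps0)
  have hwt_ne : wt X ≠ 0 := fun h => by simp [h] at hwt0; exact (aleph0_ne_zero hwt0)
  have hwtκ : wt X ≤ κ := le_mul_right hps_ne
  have hpsκ : psic X ≤ κ := le_mul_left hwt_ne
  have hκ0 : ℵ₀ ≤ κ := hwt0.trans hwtκ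
  have h2κ : ℵ₀ ≤ 2 ^ κ := hκ0.trans (cantor κ).le
  -- choice of small dense-in-closure subsets of elements of 𝒞
  have hSex : ∀ (x : X) (C : Set X), ∃ B : Set X,
      C ∈ 𝒞 → B ⊆ C ∧ #B ≤ 2 ^ wt X ∧ x ∈ closure B := by
    intro x C
    by_cases hc : C ∈ 𝒞
    · have hx : x ∈ clk (2 ^ wt X) C := by rw [(hC C hc).2]; trivial
      simp only [clk, mem_iUnion] at hx
      obtain ⟨B, ⟨hB1, hB2⟩, hB3⟩ := hx
      exact ⟨B, fun _ => ⟨hB1, hB2, hB3⟩⟩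
    · exact ⟨∅, fun h => absurd h hc⟩
  choose S hS using hSex
  -- the saturation chain
  set G0 : ℕ → Set X := fun n => Nat.rec D (fun _ g => g ∪ ⋃ x ∈ g, ⋃ C ∈ 𝒞, S x C) n with hG0
  set G : Set X := ⋃ n, G0 n with hGdef
  have hDG : D ⊆ G := subset_iUnion G0 0
  -- cardinality of G
  set μ : Cardinal.{u} := #D + 2 ^ κ with hμdef
  have hμ0 : ℵ₀ ≤ μ := h2κ.trans (self_le_add_left _ _)
  have h2wtμ : (2 : Cardinal.{u}) ^ wt X ≤ μ :=
    (power_le_power_left two_ne_zero hwtκ).trans (self_le_add_left _ _)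
  have hG0card : ∀ n, #(G0 n) ≤ μ := by
    intro n
    induction n with
    | zero => exact le_trans le_rfl (self_le_add_right _ _)
    | succ n ih =>
      have hbig : #(⋃ x ∈ G0 n, ⋃ C ∈ 𝒞, S x C) ≤ μ := by
        refine le_trans (mk_biUnion_le _ _) ?_
        have hx : ∀ x : G0 n, #(⋃ C ∈ 𝒞, S (x : X) C) ≤ μ := by
          intro x
          refine le_trans (mk_biUnion_le _ _) ?_
          have hc : ∀ C : 𝒞, #(S (x : X) (C : Set X)) ≤ μ := fun C =>
            (hS (x : X) (C : Set X) C.2).2.1.trans h2wtμ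
          calc #(↥𝒞) * ⨆ C : 𝒞, #(S (x : X) (C : Set X))
              ≤ μ * μ := mul_le_mul' (hcard𝒞.trans h2wtμ) (ciSup_le' hc)
            _ = μ := mul_eq_self hμ0
        calc #(G0 n) * ⨆ x : G0 n, #(⋃ C ∈ 𝒞, S (x : X) C)
            ≤ μ * μ := mul_le_mul' ih (ciSup_le' hx)
          _ = μ := mul_eq_self hμ0
      calc #(G0 (n + 1)) ≤ #(G0 n) + #(⋃ x ∈ G0 n, ⋃ C ∈ 𝒞, S x C) := mk_union_le _ _
        _ ≤ μ + μ := add_le_add ih hbig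
        _ = μ := add_eq_self hμ0
  have hGcard : #G ≤ μ := by
    have heq : G = ⋃ n : ULift.{u} ℕ, G0 n.down := by
      apply subset_antisymm
      · exact iUnion_subset fun n => subset_iUnion (fun m : ULift.{u} ℕ => G0 m.down) ⟨n⟩
      · exact iUnion_subset fun n => subset_iUnion G0 n.down
    rw [heq]
    refine le_trans (mk_iUnion_le _) ?_
    calc #(ULift.{u} ℕ) * ⨆ n : ULift.{u} ℕ, #(G0 n.down)
        ≤ μ * μ := by
          refine mul_le_mul' ?_ (ciSup_le' fun n => hG0card n.down)
          simp only [mk_uLift, mk_nat, lift_aleph0]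
          exact hμ0
      _ = μ := mul_eq_self hμ0
  -- G is saturated
  have hGsat : ∀ C ∈ 𝒞, G ⊆ closure (G ∩ C) := by
    intro C hCmem y hy
    obtain ⟨n, hyn⟩ := mem_iUnion.1 hy
    have hsub : S y C ⊆ G ∩ C := by
      intro z hz
      refine ⟨mem_iUnion.2 ⟨n + 1, Or.inr ?_⟩, (hS y C hCmem).1 hz⟩
      exact mem_biUnion hyn (mem_biUnion hCmem hz)
    exact closure_mono hsub (hS y C hCmem).2.2
  -- key: points of closure G are in closures of small subsets of G ∩ U
  have hkey : ∀ x ∈ closure G, ∀ U : Set X, IsOpen U → x ∈ U →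
      ∃ B : Set X, B ⊆ G ∧ B ⊆ U ∧ #B ≤ κ ∧ x ∈ closure B := by
    intro x hx U hUo hxU
    have hxC : x ∈ ⋃₀ 𝒞 := by rw [hcov]; trivial
    obtain ⟨C, hCmem, hxC⟩ := hxC
    have step0 : x ∈ closure (G ∩ U) := hUo.closure_inter ⟨hx, hxU⟩
    have hsub : G ∩ U ⊆ closure (G ∩ U ∩ C) := by
      rintro y ⟨hyG, hyU⟩
      have h2 : y ∈ closure (U ∩ (G ∩ C)) := hUo.inter_closure ⟨hyU, hGsat C hCmem hyG⟩
      refine closure_mono ?_ h2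
      rintro z ⟨hzU, hzG, hzC⟩
      exact ⟨⟨hzG, hzU⟩, hzC⟩
    have hx2 : x ∈ closure (G ∩ U ∩ C) :=
      closure_minimal hsub isClosed_closure step0
    have hx3 : (⟨x, hxC⟩ : ↥C) ∈ closure ((Subtype.val : ↥C → X) ⁻¹' (G ∩ U)) := by
      rw [closure_subtype]
      refine closure_mono ?_ hx2
      rintro z ⟨hzGU, hzC⟩
      exact ⟨⟨z, hzC⟩, hzGU, rfl⟩
    obtain ⟨B', hB'sub, hB'card, hB'cl⟩ := tightness_spec' (↥C) _ _ hx3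
    refine ⟨Subtype.val '' B', ?_, ?_, ?_, ?_⟩
    · rintro z ⟨w, hw, rfl⟩; exact (hB'sub hw).1
    · rintro z ⟨w, hw, rfl⟩; exact (hB'sub hw).2
    · exact mk_image_le.trans (hB'card.trans ((hC C hCmem).1.trans hwtκ))
    · exact closure_subtype.1 hB'cl
  -- choose the coding sets
  have hBex : ∀ (x : X) (U : Set X), ∃ B : Set X,
      x ∈ closure G → U ∈ 𝒰 x → B ⊆ G ∧ B ⊆ U ∧ #B ≤ κ ∧ x ∈ closure B := by
    intro x U
    by_cases h : x ∈ closure G ∧ U ∈ 𝒰 x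
    · obtain ⟨B, h1, h2, h3, h4⟩ := hkey x h.1 U (hU2 x U h.2).1 (hU2 x U h.2).2
      exact ⟨B, fun _ _ => ⟨h1, h2, h3, h4⟩⟩
    · exact ⟨∅, fun h1 h2 => absurd ⟨h1, h2⟩ h⟩
  choose B hB using hBex
  -- the injection
  set ℬ : Set (Set X) := {s | s ⊆ G ∧ #s ≤ κ} with hℬdef
  set Φ : ↥(closure G) → Set (Set X) := fun x => B (x : X) '' 𝒰 (x : X) with hΦdef
  have hΦinj : Function.Injective Φ := by
    intro a b h
    have hba : (b : X) ∈ ⋂ U ∈ 𝒰 (a : X), closure U := by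
      refine mem_iInter₂.2 fun U hUmem => ?_
      have h1 : B (a : X) U ∈ Φ a := mem_image_of_mem _ hUmem
      rw [h] at h1
      obtain ⟨V, hVmem, hVeq⟩ := h1
      have hbV : (b : X) ∈ closure (B (b : X) V) := (hB (b : X) V b.2 hVmem).2.2.2
      rw [hVeq] at hbV
      exact closure_mono (hB (a : X) U a.2 hUmem).2.1 hbV
    rw [hU3 (a : X)] at hba
    exact Subtype.ext hba.symm
  have hΦmem : ∀ x : ↥(closure G), Φ x ⊆ ℬ ∧ #(Φ x) ≤ κ := by
    intro x
    constructor
    · rintro s ⟨U, hUmem, rfl⟩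
      exact ⟨(hB (x : X) U x.2 hUmem).1, (hB (x : X) U x.2 hUmem).2.2.1⟩
    · exact mk_image_le.trans ((hU1 (x : X)).trans hpsκ)
  have hmain : #(closure G) ≤ #{𝒮 : Set (Set X) // 𝒮 ⊆ ℬ ∧ #𝒮 ≤ κ} := by
    refine ⟨⟨fun x => ⟨Φ x, hΦmem x⟩, fun a b h => hΦinj ?_⟩⟩
    exact congrArg Subtype.val h
  -- cardinal arithmetic
  set ν : Cardinal.{u} := #D ^ κ with hνdef
  have hν0 : ℵ₀ ≤ ν := h2κ.trans (power_le_power_right h2D)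
  have hκ1 : (1 : Cardinal.{u}) ≤ κ := one_le_aleph0.trans hκ0
  have hμν : μ ≤ ν := by
    have h1 : #D ≤ ν := self_le_power _ hκ1
    have h2 : (2 : Cardinal.{u}) ^ κ ≤ ν := power_le_power_right h2D
    calc μ ≤ ν + ν := add_le_add h1 h2
      _ = ν := add_eq_self hν0
  have hℬcard : #ℬ ≤ ν ^ κ := by
    refine le_trans (mk_bounded_subset_le G κ) ?_
    refine power_le_power_right (max_le (hGcard.trans hμν) hν0)
  have hfin : #{𝒮 : Set (Set X) // 𝒮 ⊆ ℬ ∧ #𝒮 ≤ κ} ≤ ν := by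
    refine le_trans (mk_bounded_subset_le ℬ κ) ?_
    have : max #ℬ ℵ₀ ≤ ν ^ κ :=
      max_le hℬcard (hν0.trans (self_le_power _ hκ1))
    calc (max #ℬ ℵ₀) ^ κ ≤ (ν ^ κ) ^ κ := power_le_power_right this
      _ = ν ^ (κ * κ) := (power_mul).symm
      _ = ν := by rw [mul_eq_self hκ0]; rw [hνdef, ← power_mul, mul_eq_self hκ0]
  calc #(closure D) ≤ #(closure G) := mk_le_mk_of_subset (closure_mono hDG)
    _ ≤ #{𝒮 : Set (Set X) // 𝒮 ⊆ ℬ ∧ #𝒮 ≤ κ} := hmain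
    _ ≤ ν := hfin
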